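/- Let c₁, c₂ > 0 and η = 2c₂·√(exp(−3 − c₁/c₂)). If 0 < τ < η, then the equation ζ²·exp((ζ − c₁)/c₂ − 1) = τ² has exactly three real solutions ζ₁ > 0 > ζ₂ > −2c₂ > ζ₃. -/

import Mathlib

open Real Set

lemma key_deriv (x : ℝ) :
    HasDerivAt (fun x : ℝ => x^2 * Real.exp x) ((x^2 + 2*x) * Real.exp x) x := by
  have h : HasDerivAt (fun x : ℝ => x^2 * Real.exp x) _ x := ((hasDerivAt_pow 2 x).mul (Real.hasDerivAt_exp x))
  convert h using 1
  ring

lemma key_cont : Continuous (fun x : ℝ => x^2 * Real.exp x) := by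
  continuity

lemma key_mono1 : StrictMonoOn (fun x : ℝ => x^2 * Real.exp x) (Set.Ici 0) := by
  apply strictMonoOn_of_deriv_pos (convex_Ici 0) key_cont.continuousOn
  intro x hx
  rw [interior_Ici] at hx
  rw [(key_deriv x).deriv]
  have : (0:ℝ) < x := hx
  positivity

lemma key_anti : StrictAntiOn (fun x : ℝ => x^2 * Real.exp x) (Set.Icc (-2) 0) := by
  apply strictAntiOn_of_deriv_neg (convex_Icc _ _) key_cont.continuousOn
  intro x hx
  rw [interior_Icc] at hx
  rw [(key_deriv x).deriv]
  have h1 : x^2 + 2*x = x * (x + 2) := by ring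
  rw [h1]
  apply mul_neg_of_neg_of_pos
  · exact mul_neg_of_neg_of_pos hx.2 (by linarith [hx.1])
  · exact Real.exp_pos x

lemma key_mono3 : StrictMonoOn (fun x : ℝ => x^2 * Real.exp x) (Set.Iic (-2)) := by
  apply strictMonoOn_of_deriv_pos (convex_Iic _) key_cont.continuousOn
  intro x hx
  rw [interior_Iic] at hx
  rw [(key_deriv x).deriv]
  have h1 : x^2 + 2*x = x * (x + 2) := by ring
  rw [h1]
  apply mul_pos
  · exact mul_pos_of_neg_of_neg (by linarith [mem_Iio.mp hx]) (by linarith [mem_Iio.mp hx])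
  · exact Real.exp_pos x

lemma key_bound {x : ℝ} (hx : x < 0) : x^2 * Real.exp x ≤ 27 / (-x) := by
  have hxpos : 0 < -x := by linarith
  have h2 : (-x)/3 + 1 ≤ Real.exp ((-x)/3) := Real.add_one_le_exp _
  have h1 : ((-x)/3)^3 ≤ Real.exp (-x) := by
    calc ((-x)/3)^3 ≤ ((-x)/3 + 1)^3 := by nlinarith
      _ ≤ (Real.exp ((-x)/3))^3 := by
          apply pow_le_pow_left₀ (by positivity) h2
      _ = Real.exp (-x) := by
          rw [← Real.exp_nat_mul]
          norm_num
          ring_nf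
  have hex : Real.exp x = 1 / Real.exp (-x) := by
    rw [Real.exp_neg]; field_simp
  rw [hex, mul_one_div, div_le_div_iff₀ (Real.exp_pos _) hxpos]
  nlinarith [Real.exp_pos (-x)]

lemma key (t : ℝ) (ht0 : 0 < t) (ht : t < 4 * Real.exp (-2)) :
    ∃ x₁ x₂ x₃ : ℝ, x₁ > 0 ∧ 0 > x₂ ∧ x₂ > -2 ∧ -2 > x₃ ∧
      x₁^2 * Real.exp x₁ = t ∧ x₂^2 * Real.exp x₂ = t ∧ x₃^2 * Real.exp x₃ = t ∧
      ∀ x, x^2 * Real.exp x = t → x = x₁ ∨ x = x₂ ∨ x = x₃ := by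
  set g : ℝ → ℝ := fun x => x^2 * Real.exp x with hg
  have hg0 : g 0 = 0 := by simp [hg]
  have hgm2 : g (-2) = 4 * Real.exp (-2) := by norm_num [hg]
  -- x₁
  set M : ℝ := max 1 t with hMdef
  have hM : t ≤ g M := by
    have h1 : (1:ℝ) ≤ M := le_max_left _ _
    have h2 : t ≤ M := le_max_right _ _
    have h3 : (1:ℝ) ≤ Real.exp M := Real.one_le_exp (by linarith)
    calc t ≤ M := h2
      _ ≤ M^2 := by nlinarith
      _ ≤ M^2 * Real.exp M := le_mul_of_one_le_right (by positivity) h3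
  obtain ⟨x₁, hx₁mem, hx₁⟩ := intermediate_value_Icc (by positivity : (0:ℝ) ≤ M)
    key_cont.continuousOn ⟨by norm_num; exact ht0.le, hM⟩
  replace hx₁ : g x₁ = t := hx₁
  have hx₁pos : 0 < x₁ := by
    rcases eq_or_lt_of_le hx₁mem.1 with h | h
    · exfalso; rw [← h, hg0] at hx₁; linarith
    · exact h
  -- x₂
  obtain ⟨x₂, hx₂mem, hx₂⟩ := intermediate_value_Icc' (by norm_num : (-2:ℝ) ≤ 0)
    key_cont.continuousOn ⟨by norm_num; exact ht0.le, by norm_num; linarith⟩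
  replace hx₂ : g x₂ = t := hx₂
  have hx₂lt : x₂ < 0 := by
    rcases eq_or_lt_of_le hx₂mem.2 with h | h
    · exfalso; rw [h, hg0] at hx₂; linarith
    · exact h
  have hx₂gt : -2 < x₂ := by
    rcases eq_or_lt_of_le hx₂mem.1 with h | h
    · exfalso; rw [← h, hgm2] at hx₂; linarith
    · exact h
  -- x₃
  set a : ℝ := -(27/t + 3) with ha
  have h27 : 0 < 27/t := by positivity
  have haneg : a < 0 := by rw [ha]; linarith
  have halt : a < -2 := by rw [ha]; linarith
  have hga : g a < t := by
    have h1 : g a ≤ 27 / (-a) := key_bound haneg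
    have h2 : -a = 27/t + 3 := by rw [ha]; ring
    have h3 : 27 / (-a) < t := by
      rw [h2, div_lt_iff₀ (by positivity)]
      have h4 : t * (27/t) = 27 := by field_simp
      nlinarith
    linarith
  obtain ⟨x₃, hx₃mem, hx₃⟩ := intermediate_value_Icc halt.le
    key_cont.continuousOn ⟨hga.le, by norm_num; linarith⟩
  replace hx₃ : g x₃ = t := hx₃
  have hx₃lt : x₃ < -2 := by
    rcases eq_or_lt_of_le hx₃mem.2 with h | h
    · exfalso; rw [h, hgm2] at hx₃; linarith
    · exact h
  refine ⟨x₁, x₂, x₃, hx₁pos, hx₂lt, hx₂gt, hx₃lt, hx₁, hx₂, hx₃, ?_⟩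
  intro x hx
  rcases le_or_gt 0 x with h0 | h0
  · left
    exact key_mono1.injOn h0 hx₁pos.le (hx.trans hx₁.symm)
  rcases le_or_gt (-2) x with h2 | h2
  · right; left
    exact key_anti.injOn ⟨h2, h0.le⟩ ⟨hx₂gt.le, hx₂lt.le⟩ (hx.trans hx₂.symm)
  · right; right
    exact key_mono3.injOn h2.le hx₃lt.le (hx.trans hx₃.symm)

theorem stmt_11 (c₁ c₂ τ : ℝ) (hc₁ : 0 < c₁) (hc₂ : 0 < c₂)
    (η : ℝ) (hη : η = 2 * c₂ * Real.sqrt (Real.exp (-3 - c₁ / c₂)))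
    (hτ0 : 0 < τ) (hτη : τ < η) :
    ∃ ζ₁ ζ₂ ζ₃ : ℝ,
      ζ₁ > 0 ∧ 0 > ζ₂ ∧ ζ₂ > -2 * c₂ ∧ -2 * c₂ > ζ₃ ∧
      ζ₁^2 * Real.exp ((ζ₁ - c₁) / c₂ - 1) = τ^2 ∧
      ζ₂^2 * Real.exp ((ζ₂ - c₁) / c₂ - 1) = τ^2 ∧
      ζ₃^2 * Real.exp ((ζ₃ - c₁) / c₂ - 1) = τ^2 ∧
      ∀ ζ : ℝ, ζ^2 * Real.exp ((ζ - c₁) / c₂ - 1) = τ^2 → ζ = ζ₁ ∨ ζ = ζ₂ ∨ ζ = ζ₃ := by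
  have hc₂ne : c₂ ≠ 0 := ne_of_gt hc₂
  set E : ℝ := Real.exp (-c₁/c₂ - 1) with hE
  have hEpos : 0 < c₂^2 * E := by positivity
  set t : ℝ := τ^2 / (c₂^2 * E) with htdef
  have ht0 : 0 < t := by positivity
  have hη2 : η^2 = 4 * c₂^2 * Real.exp (-3 - c₁/c₂) := by
    rw [hη, mul_pow, mul_pow, Real.sq_sqrt (Real.exp_nonneg _)]
    ring
  have hexp : Real.exp (-3 - c₁/c₂) = Real.exp (-2) * E := by
    rw [hE, ← Real.exp_add]
    ring_nf
  have hτ2 : τ^2 < η^2 := by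
    have hηpos : 0 < η := lt_trans hτ0 hτη
    nlinarith
  have ht : t < 4 * Real.exp (-2) := by
    rw [htdef, div_lt_iff₀ hEpos]
    rw [hη2, hexp] at hτ2
    nlinarith
  have heq : ∀ ζ : ℝ, (ζ^2 * Real.exp ((ζ - c₁) / c₂ - 1) = τ^2 ↔
      (ζ/c₂)^2 * Real.exp (ζ/c₂) = t) := by
    intro ζ
    have h1 : (ζ - c₁)/c₂ - 1 = ζ/c₂ + (-c₁/c₂ - 1) := by field_simp; ring
    rw [h1, Real.exp_add, ← hE, htdef, eq_div_iff (ne_of_gt hEpos)]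
    constructor
    · intro h; rw [← h]; field_simp
    · intro h; rw [← h]; field_simp
  obtain ⟨x₁, x₂, x₃, hx₁p, hx₂n, hx₂g, hx₃l, he₁, he₂, he₃, huniq⟩ := key t ht0 ht
  refine ⟨c₂ * x₁, c₂ * x₂, c₂ * x₃, by positivity, by nlinarith, by nlinarith, by nlinarith,
    ?_, ?_, ?_, ?_⟩
  · rw [heq]; rw [mul_div_cancel_left₀ _ hc₂ne]; exact he₁
  · rw [heq]; rw [mul_div_cancel_left₀ _ hc₂ne]; exact he₂
  · rw [heq]; rw [mul_div_cancel_left₀ _ hc₂ne]; exact he₃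
  · intro ζ hζ
    rw [heq] at hζ
    rcases huniq _ hζ with h | h | h
    · left; field_simp at h; linarith
    · right; left; field_simp at h; linarith
    · right; right; field_simp at h; linarith
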